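/- Let t0 = (e-1)/(e+1). The function g(K) = (t0^(1/K)·log(1/t0²)) / (K·(1 - t0^(2/K))) is monotone increasing on (1,∞), tending to 2·t0·log(t0)/(t0² - 1) as K → 1 and to 1 as K → ∞. -/

import Mathlib

open Real Filter Set

lemma aux_sinh_le (x : ℝ) (hx : 0 ≤ x) : Real.sinh x ≤ x * Real.cosh x := by
  have hmono : MonotoneOn (fun y : ℝ => y * Real.cosh y - Real.sinh y) (Set.Ici 0) := by
    apply monotoneOn_of_deriv_nonneg (convex_Ici 0)
    · fun_prop
    · intro y _
      exact ((((hasDerivAt_id y).mul (Real.hasDerivAt_cosh y)).sub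
        (Real.hasDerivAt_sinh y)).differentiableAt).differentiableWithinAt
    · intro y hy
      rw [interior_Ici] at hy
      have h : HasDerivAt (fun y : ℝ => y * Real.cosh y - Real.sinh y)
          (1 * Real.cosh y + y * Real.sinh y - Real.cosh y) y :=
        ((hasDerivAt_id y).mul (Real.hasDerivAt_cosh y)).sub (Real.hasDerivAt_sinh y)
      rw [h.deriv]
      have : 0 ≤ y * Real.sinh y :=
        mul_nonneg (le_of_lt hy) (le_of_lt (Real.sinh_pos_iff.mpr hy))
      linarith
  have := hmono (Set.self_mem_Ici) hx hx
  simp at this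
  linarith

lemma aux_mono : MonotoneOn (fun x : ℝ => Real.sinh x / x) (Set.Ioi 0) := by
  apply monotoneOn_of_deriv_nonneg (convex_Ioi 0)
  · apply ContinuousOn.div Real.continuous_sinh.continuousOn continuousOn_id
    intro y hy; exact ne_of_gt hy
  · intro y hy
    rw [interior_Ioi] at hy
    have h : HasDerivAt (fun x : ℝ => Real.sinh x / x)
        ((Real.cosh y * y - Real.sinh y * 1) / y ^ 2) y :=
      (Real.hasDerivAt_sinh y).div (hasDerivAt_id y) (ne_of_gt hy)
    exact h.differentiableAt.differentiableWithinAt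
  · intro y hy
    rw [interior_Ioi] at hy
    have h : HasDerivAt (fun x : ℝ => Real.sinh x / x)
        ((Real.cosh y * y - Real.sinh y * 1) / y ^ 2) y :=
      (Real.hasDerivAt_sinh y).div (hasDerivAt_id y) (ne_of_gt hy)
    rw [h.deriv]
    have h1 : Real.sinh y ≤ y * Real.cosh y := aux_sinh_le y hy.le
    have h2 : (0:ℝ) < y ^ 2 := pow_pos (Set.mem_Ioi.mp hy) 2
    apply div_nonneg _ h2.le
    linarith

lemma aux_key (t0 : ℝ) (h0 : 0 < t0) (h1 : t0 < 1) (K : ℝ) (hK : 0 < K) :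
    (t0 ^ (1 / K) * Real.log (1 / t0 ^ (2:ℕ))) / (K * (1 - t0 ^ (2 / K)))
      = (-Real.log t0 / K) / Real.sinh (-Real.log t0 / K) := by
  have hlog : Real.log t0 < 0 := Real.log_neg h0 h1
  set c : ℝ := -Real.log t0 with hc
  have hcpos : 0 < c := by simp [hc]; linarith
  set u : ℝ := c / K with hu
  have hupos : 0 < u := div_pos hcpos hK
  have e1 : t0 ^ (1 / K) = Real.exp (-u) := by
    rw [Real.rpow_def_of_pos h0]
    congr 1
    field_simp [hu, hc]
    rw [hu, hc]; field_simp
  have e2 : t0 ^ (2 / K) = Real.exp (-(2*u)) := by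
    rw [Real.rpow_def_of_pos h0]
    congr 1
    field_simp [hu, hc]
    rw [hu, hc]; field_simp
  have e3 : Real.log (1 / t0 ^ (2:ℕ)) = 2 * c := by
    rw [one_div, Real.log_inv, Real.log_pow]
    simp [hc]
  rw [e1, e2, e3, Real.sinh_eq]
  set a := Real.exp (-u) with ha
  set b := Real.exp u with hb
  have hab : a * b = 1 := by rw [ha, hb, ← Real.exp_add]; simp
  have hane : a ≠ 0 := Real.exp_ne_zero _
  have hba : a < b := Real.exp_lt_exp.mpr (by linarith)
  have hd1 : b - a ≠ 0 := by linarith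
  have hexp : Real.exp (-(2*u)) = a * a := by rw [ha, ← Real.exp_add]; ring_nf
  rw [hexp]
  have hden : K * (1 - a * a) = a * (K * (b - a)) := by nlinarith [hab]
  have hKu : c = K * u := by rw [hu]; field_simp
  have hden_ne : K * (1 - a * a) ≠ 0 := by
    rw [hden]; exact mul_ne_zero hane (mul_ne_zero (ne_of_gt hK) hd1)
  have hden2 : (b - a) / 2 ≠ 0 := div_ne_zero hd1 two_ne_zero
  rw [div_eq_div_iff hden_ne hden2]
  linear_combination (a * (b - a)) * hKu + (K * u) * hab

lemma aux_val (t0 : ℝ) (h0 : 0 < t0) (h1 : t0 < 1) :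
    2 * t0 * Real.log t0 / (t0 ^ (2:ℕ) - 1)
      = (-Real.log t0) / Real.sinh (-Real.log t0) := by
  have hinv1 : (1:ℝ) < t0⁻¹ := by
    have h := mul_lt_mul_of_pos_left h1 (inv_pos.mpr h0)
    rwa [inv_mul_cancel₀ (ne_of_gt h0), mul_one] at h
  have ht2 : t0 ^ (2:ℕ) - 1 ≠ 0 := by nlinarith
  have hti : t0⁻¹ - t0 ≠ 0 := sub_ne_zero.mpr (show t0 < t0⁻¹ by linarith).ne'
  have ht2' : (1:ℝ) - t0 ^ (2:ℕ) ≠ 0 := by intro h; apply ht2; linarith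
  rw [Real.sinh_eq, neg_neg, Real.exp_neg, Real.exp_log h0]
  rw [div_eq_div_iff ht2 (div_ne_zero hti two_ne_zero)]
  have hinv : t0 * t0⁻¹ = 1 := mul_inv_cancel₀ (ne_of_gt h0)
  linear_combination (Real.log t0) * hinv

theorem stmt_7 :
    let t0 : ℝ := (Real.exp 1 - 1) / (Real.exp 1 + 1)
    let g : ℝ → ℝ := fun K =>
      (t0 ^ (1 / K) * Real.log (1 / t0 ^ (2:ℕ))) / (K * (1 - t0 ^ (2 / K)))
    MonotoneOn g (Set.Ioi 1) ∧
    Filter.Tendsto g (nhdsWithin 1 (Set.Ioi 1))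
      (nhds (2 * t0 * Real.log t0 / (t0 ^ (2:ℕ) - 1))) ∧
    Filter.Tendsto g Filter.atTop (nhds 1) := by
  intro t0 g
  have he : (1:ℝ) < Real.exp 1 := by
    have := Real.exp_one_gt_d9; linarith
  have h0 : 0 < t0 := by
    apply div_pos <;> linarith
  have h1 : t0 < 1 := by
    rw [div_lt_one (by linarith)]; linarith
  have hlog : Real.log t0 < 0 := Real.log_neg h0 h1
  set c : ℝ := -Real.log t0 with hc
  have hcpos : 0 < c := by simp [hc]; linarith
  have hkey : ∀ K : ℝ, 0 < K → g K = (c / K) / Real.sinh (c / K) :=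
    fun K hK => aux_key t0 h0 h1 K hK
  refine ⟨?_, ?_, ?_⟩
  · intro K1 hK1 K2 hK2 hle
    simp only [Set.mem_Ioi] at hK1 hK2
    have hK1p : 0 < K1 := by linarith
    have hK2p : 0 < K2 := by linarith
    rw [hkey K1 hK1p, hkey K2 hK2p]
    set u1 := c / K1 with hu1
    set u2 := c / K2 with hu2
    have hu1p : 0 < u1 := div_pos hcpos hK1p
    have hu2p : 0 < u2 := div_pos hcpos hK2p
    have hule : u2 ≤ u1 := div_le_div_of_nonneg_left hcpos.le hK1p hle
    have hs1 : 0 < Real.sinh u1 := Real.sinh_pos_iff.mpr hu1p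
    have hs2 : 0 < Real.sinh u2 := Real.sinh_pos_iff.mpr hu2p
    have := aux_mono (Set.mem_Ioi.mpr hu2p) (Set.mem_Ioi.mpr hu1p) hule
    simp only at this
    rw [div_le_div_iff₀ hs1 hs2]
    rw [div_le_div_iff₀ hu2p hu1p] at this
    nlinarith
  · have hscpos : 0 < Real.sinh c := Real.sinh_pos_iff.mpr hcpos
    have hsc : Real.sinh c ≠ 0 := ne_of_gt hscpos
    have hval : 2 * t0 * Real.log t0 / (t0 ^ (2:ℕ) - 1) = c / Real.sinh c :=
      aux_val t0 h0 h1
    rw [hval]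
    have htend : Filter.Tendsto (fun K : ℝ => (c / K) / Real.sinh (c / K))
        (nhdsWithin 1 (Set.Ioi 1)) (nhds (c / Real.sinh c)) := by
      have h2 : Filter.Tendsto (fun K : ℝ => c / K) (nhdsWithin 1 (Set.Ioi 1)) (nhds c) := by
        have : ContinuousAt (fun K : ℝ => c / K) 1 :=
          ContinuousAt.div continuousAt_const continuousAt_id one_ne_zero
        simpa using this.continuousWithinAt.tendsto
      have h3 : ContinuousAt (fun x : ℝ => x / Real.sinh x) c :=
        ContinuousAt.div continuousAt_id Real.continuous_sinh.continuousAt hsc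
      exact (h3.tendsto).comp h2
    apply htend.congr'
    filter_upwards [self_mem_nhdsWithin] with K hK
    exact (hkey K (by linarith [Set.mem_Ioi.mp hK])).symm
  · have hslope : Filter.Tendsto (fun x : ℝ => Real.sinh x / x) (nhdsWithin 0 {(0:ℝ)}ᶜ)
        (nhds 1) := by
      have h := (hasDerivAt_iff_tendsto_slope.mp (Real.hasDerivAt_sinh 0))
      rw [Real.cosh_zero] at h
      apply h.congr
      intro x
      simp [slope_def_field]
    have hh : Filter.Tendsto (fun x : ℝ => x / Real.sinh x) (nhdsWithin 0 {(0:ℝ)}ᶜ)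
        (nhds 1) := by
      have h := hslope.inv₀ one_ne_zero
      simp only [inv_one] at h
      apply h.congr
      intro x
      rw [inv_div]
    have h2a : Filter.Tendsto (fun K : ℝ => c / K) Filter.atTop (nhds 0) :=
      Filter.Tendsto.div_atTop tendsto_const_nhds tendsto_id
    have h2 : Filter.Tendsto (fun K : ℝ => c / K) Filter.atTop
        (nhdsWithin 0 {(0:ℝ)}ᶜ) := by
      apply tendsto_nhdsWithin_of_tendsto_nhds_of_eventually_within _ h2a
      filter_upwards [Filter.eventually_gt_atTop 0] with K hK
      simpa using ne_of_gt (div_pos hcpos hK)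
    have hcomp := hh.comp h2
    apply hcomp.congr'
    filter_upwards [Filter.eventually_gt_atTop 0] with K hK
    exact (hkey K hK).symm
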